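/- arXiv:math/0312108 — 4 statements merged into one kernel-verified Lean document; each statement's English description precedes it below -/
import Mathlib

section
/- Let H be an infinite-dimensional Hilbert space, let V be a one-dimensional subspace of H spanned by a nonzero vector φ, and let E be a dense subspace of H. Then the orthogonal complement of the set E ∩ V^⊥ (taken in H) equals V. -/
/-- If `H` is an infinite-dimensional Hilbert space, `V = span{φ}` with `φ ≠ 0`,
and `E ⊆ H` is a dense subspace, then `(E ∩ V^⊥)^⊥ = V`. -/
theorem stmt0 {H : Type*} [NormedAddCommGroup H] [InnerProductSpace ℂ H] [CompleteSpace H]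
    (hinf : ¬ FiniteDimensional ℂ H)
    (φ : H) (hφ : φ ≠ 0) (E : Submodule ℂ H) (hE : Dense (E : Set H)) :
    (E ⊓ (ℂ ∙ φ)ᗮ)ᗮ = (ℂ ∙ φ) := by
  set V : Submodule ℂ H := ℂ ∙ φ with hV
  -- there is e ∈ E with ⟪φ, e⟫ ≠ 0
  obtain ⟨e, heE, hce⟩ : ∃ e ∈ E, (inner ℂ φ e : ℂ) ≠ 0 := by
    by_contra h
    push_neg at h
    have hEle : E ≤ Vᗮ := fun x hx =>
      Submodule.mem_orthogonal_singleton_iff_inner_right.2 (h x hx)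
    have hd : Dense ((Vᗮ : Submodule ℂ H) : Set H) := hE.mono hEle
    have huniv : ((Vᗮ : Submodule ℂ H) : Set H) = Set.univ := by
      have := hd.closure_eq
      rwa [(V.isClosed_orthogonal).closure_eq] at this
    have hφmem : φ ∈ Vᗮ := by
      have : φ ∈ ((Vᗮ : Submodule ℂ H) : Set H) := huniv ▸ Set.mem_univ φ
      exact this
    exact hφ (by simpa using Submodule.mem_orthogonal_singleton_iff_inner_right.1 hφmem)
  have hcen : (0:ℝ) < ‖(inner ℂ φ e : ℂ)‖ := norm_pos_iff.2 hce
  -- E ⊓ Vᗮ is dense in Vᗮ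
  have hdense : Vᗮ ≤ (E ⊓ Vᗮ).topologicalClosure := by
    intro x hx
    have hx0 : (inner ℂ φ x : ℂ) = 0 := Submodule.mem_orthogonal_singleton_iff_inner_right.1 hx
    show x ∈ closure ((E ⊓ Vᗮ : Submodule ℂ H) : Set H)
    rw [Metric.mem_closure_iff]
    intro ε hε
    set C : ℝ := 1 + ‖φ‖ * ‖e‖ / ‖(inner ℂ φ e : ℂ)‖ with hC
    have hC0 : (0:ℝ) ≤ ‖φ‖ * ‖e‖ / ‖(inner ℂ φ e : ℂ)‖ := by positivity
    have hCpos : (0:ℝ) < C := by rw [hC]; positivity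
    obtain ⟨y, hyE, hyd⟩ := hE.exists_dist_lt x (div_pos hε hCpos)
    set c : ℂ := (inner ℂ φ y : ℂ) / (inner ℂ φ e : ℂ) with hc
    refine ⟨y - c • e, ?_, ?_⟩
    · refine Submodule.mem_inf.2 ⟨E.sub_mem hyE (E.smul_mem c heE), ?_⟩
      refine Submodule.mem_orthogonal_singleton_iff_inner_right.2 ?_
      rw [inner_sub_right, inner_smul_right, hc, div_mul_cancel₀ _ hce, sub_self]
    · have key : ‖(inner ℂ φ y : ℂ)‖ ≤ ‖φ‖ * dist x y := by
        have : (inner ℂ φ y : ℂ) = inner ℂ φ (y - x) := by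
          rw [inner_sub_right, hx0, sub_zero]
        rw [this]
        calc ‖(inner ℂ φ (y - x) : ℂ)‖ ≤ ‖φ‖ * ‖y - x‖ := norm_inner_le_norm φ (y - x)
          _ = ‖φ‖ * dist x y := by rw [dist_comm, dist_eq_norm]
      have hnc : ‖c • e‖ ≤ ‖φ‖ * ‖e‖ / ‖(inner ℂ φ e : ℂ)‖ * dist x y := by
        rw [norm_smul, hc, norm_div]
        calc ‖(inner ℂ φ y : ℂ)‖ / ‖(inner ℂ φ e : ℂ)‖ * ‖e‖
            ≤ ‖φ‖ * dist x y / ‖(inner ℂ φ e : ℂ)‖ * ‖e‖ := by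
              gcongr
          _ = ‖φ‖ * ‖e‖ / ‖(inner ℂ φ e : ℂ)‖ * dist x y := by ring
      calc dist x (y - c • e) ≤ dist x y + dist y (y - c • e) := dist_triangle _ _ _
        _ = dist x y + ‖c • e‖ := by rw [dist_eq_norm]; simp
        _ ≤ dist x y + ‖φ‖ * ‖e‖ / ‖(inner ℂ φ e : ℂ)‖ * dist x y := by linarith
        _ = dist x y * C := by rw [hC]; ring
        _ < ε / C * C := by gcongr
        _ = ε := div_mul_cancel₀ _ (ne_of_gt hCpos)
  -- conclude
  have hVV : Vᗮᗮ = V := Submodule.orthogonal_orthogonal V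
  refine le_antisymm ?_ ?_
  · have h1 : (E ⊓ Vᗮ)ᗮ = (E ⊓ Vᗮ)ᗮᗮᗮ := Submodule.triorthogonal_eq_orthogonal.symm
    have h2 : (E ⊓ Vᗮ)ᗮᗮ = (E ⊓ Vᗮ).topologicalClosure :=
      Submodule.orthogonal_orthogonal_eq_closure _
    rw [h1, h2]
    calc ((E ⊓ Vᗮ).topologicalClosure)ᗮ ≤ Vᗮᗮ := Submodule.orthogonal_le hdense
      _ = V := hVV
  · calc V = Vᗮᗮ := hVV.symm
      _ ≤ (E ⊓ Vᗮ)ᗮ := Submodule.orthogonal_le inf_le_right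
end

section
/- Let H be an infinite-dimensional Hilbert space, let V ⊆ H be a finite-dimensional subspace, and let E ⊆ H be a dense linear subspace. Then E ∩ V^⊥ is nonempty (contains nonzero vectors unless V^⊥ = 0) and E ∩ V^⊥ is dense in V^⊥. -/
/-- If `H` is an infinite-dimensional Hilbert space, `V ⊆ H` a finite-dimensional subspace,
and `E ⊆ H` a dense linear subspace, then `E ∩ V^⊥` contains nonzero vectors unless `V^⊥ = 0`,
and `E ∩ V^⊥` is dense in `V^⊥`. -/
theorem stmt1 {H : Type*} [NormedAddCommGroup H] [InnerProductSpace ℂ H] [CompleteSpace H]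
    (hinf : ¬ FiniteDimensional ℂ H)
    (V : Submodule ℂ H) [FiniteDimensional ℂ V]
    (E : Submodule ℂ H) (hE : Dense (E : Set H)) :
    (Vᗮ ≠ ⊥ → ∃ x ∈ E ⊓ Vᗮ, x ≠ 0) ∧ (E ⊓ Vᗮ).topologicalClosure = Vᗮ := by
  classical
  set Q : H →L[ℂ] V := V.orthogonalProjectionOnto with hQ
  set Q' : E →ₗ[ℂ] V := Q.toLinearMap.comp E.subtype with hQ'
  -- range of Q' is dense in V, hence all of V since V is finite-dimensional
  have hsurj : Function.Surjective Q' := by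
    rw [← LinearMap.range_eq_top]
    have hclosed : IsClosed ((LinearMap.range Q' : Submodule ℂ V) : Set V) :=
      Submodule.closed_of_finiteDimensional _
    have hdense : ∀ y : V, y ∈ closure ((LinearMap.range Q' : Submodule ℂ V) : Set V) := by
      intro y
      have h1 : (y : H) ∈ closure (E : Set H) := hE _
      have h2 : Q (y : H) ∈ closure (Q '' (E : Set H)) :=
        image_closure_subset_closure_image Q.continuous ⟨_, h1, rfl⟩
      have h3 : Q '' (E : Set H) ⊆ (LinearMap.range Q' : Submodule ℂ V) := by
        rintro z ⟨e, he, rfl⟩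
        exact ⟨⟨e, he⟩, rfl⟩
      have h4 : Q (y : H) = y := Submodule.orthogonalProjectionOnto_mem_subspace_eq_self y
      rw [h4] at h2
      exact closure_mono h3 h2
    ext y
    simp only [Submodule.mem_top, iff_true]
    have := hdense y
    rwa [hclosed.closure_eq] at this
  obtain ⟨g, hg⟩ := Q'.exists_rightInverse_of_surjective (LinearMap.range_eq_top.mpr hsurj)
  set s : V →ₗ[ℂ] H := E.subtype.comp g with hs
  have hscont : Continuous s := s.continuous_of_finiteDimensional
  set f : H → H := fun x => x - s (Q x) with hf
  have hfcont : Continuous f := continuous_id.sub (hscont.comp Q.continuous)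
  have hQs : ∀ v : V, Q (s v) = v := by
    intro v
    have : Q' (g v) = v := by
      have := LinearMap.congr_fun hg v
      simpa using this
    simpa [hs, hQ'] using this
  have hfE : ∀ e ∈ E, f e ∈ E ⊓ Vᗮ := by
    intro e he
    rw [Submodule.mem_inf]
    constructor
    · exact E.sub_mem he (g (Q e)).2
    · rw [← Submodule.orthogonalProjectionOnto_eq_zero_iff]
      simp [hf, map_sub, ← hQ, hQs]
  have hfV : ∀ x ∈ Vᗮ, f x = x := by
    intro x hx
    have : Q x = 0 := Submodule.orthogonalProjectionOnto_eq_zero_iff.mpr hx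
    simp [hf, this]
  have hdense2 : (E ⊓ Vᗮ).topologicalClosure = Vᗮ := by
    apply le_antisymm
    · have h1 : (E ⊓ Vᗮ).topologicalClosure ≤ Vᗮ.topologicalClosure :=
        Submodule.topologicalClosure_mono inf_le_right
      rwa [IsClosed.submodule_topologicalClosure_eq (Submodule.isClosed_orthogonal V)] at h1
    · intro x hx
      have h1 : x ∈ closure (E : Set H) := hE x
      have h2 : f x ∈ closure (f '' (E : Set H)) :=
        image_closure_subset_closure_image hfcont ⟨_, h1, rfl⟩
      have h3 : f '' (E : Set H) ⊆ ((E ⊓ Vᗮ : Submodule ℂ H) : Set H) := by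
        rintro z ⟨e, he, rfl⟩
        exact hfE e he
      have h4 : f x = x := hfV x hx
      rw [h4] at h2
      exact closure_mono h3 h2
  refine ⟨?_, hdense2⟩
  intro hne
  obtain ⟨x, hxV, hx0⟩ := Submodule.exists_mem_ne_zero_of_ne_bot hne
  have hxcl : x ∈ closure ((E ⊓ Vᗮ : Submodule ℂ H) : Set H) := by
    rw [← hdense2] at hxV
    exact hxV
  have hnorm : (0 : ℝ) < ‖x‖ := norm_pos_iff.mpr hx0
  obtain ⟨y, hy, hdist⟩ := Metric.mem_closure_iff.mp hxcl ‖x‖ hnorm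
  refine ⟨y, hy, ?_⟩
  intro h0
  rw [h0, dist_zero_right] at hdist
  exact lt_irrefl _ hdist
end

section
/- Under the hypotheses of the previous lemma, there exists ε ∈ (0, a] and a unique continuous family of bounded operators T(t) : H → V, t ∈ [0, ε], such that Q P_t (Id − T(t)) = 0 for all t ∈ [0, ε]; explicitly T(t) = R(t) Q P_t where R(t) is the inverse of Q P_t on V. -/
open Set

/-- With `H` a Hilbert space, `V` a finite-dimensional subspace, `Q` the orthogonal projection
onto `V`, and `(P_t)_{t∈[0,a]}` a strongly continuous family of bounded projections with
`P_0 = Id`, there exist `ε ∈ (0, a]` and a unique strongly continuous family of bounded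
operators `T(t) : H → V`, `t ∈ [0, ε]`, such that `Q P_t (Id − T(t)) = 0`. -/
theorem stmt3 {H : Type*} [NormedAddCommGroup H] [InnerProductSpace ℂ H] [CompleteSpace H]
    (V : Submodule ℂ H) [FiniteDimensional ℂ V]
    (a : ℝ) (ha : 0 < a) (P : ℝ → H →L[ℂ] H)
    (hP0 : P 0 = ContinuousLinearMap.id ℂ H)
    (hproj : ∀ t ∈ Icc (0 : ℝ) a, (P t) ∘L (P t) = P t)
    (hcont : ∀ x : H, ContinuousOn (fun t => P t x) (Icc (0 : ℝ) a)) :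
    ∃ ε : ℝ, 0 < ε ∧ ε ≤ a ∧ ∃ T : ℝ → (H →L[ℂ] V),
      (∀ x : H, ContinuousOn (fun t => T t x) (Icc (0 : ℝ) ε)) ∧
      (∀ t ∈ Icc (0 : ℝ) ε, ∀ x : H,
        Submodule.orthogonalProjection V (P t (x - (T t x : H))) = 0) ∧
      (∀ T' : ℝ → (H →L[ℂ] V),
        (∀ x : H, ContinuousOn (fun t => T' t x) (Icc (0 : ℝ) ε)) →
        (∀ t ∈ Icc (0 : ℝ) ε, ∀ x : H,
          Submodule.orthogonalProjection V (P t (x - (T' t x : H))) = 0) →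
        ∀ t ∈ Icc (0 : ℝ) ε, T' t = T t) := by
  set Q : H →L[ℂ] V := Submodule.orthogonalProjection V with hQ
  set S : ℝ → (V →L[ℂ] V) := fun t => Q ∘L ((P t) ∘L V.subtypeL) with hSdef
  have hS0 : S 0 = 1 := by
    ext v
    simp [hSdef, hQ, hP0, Submodule.orthogonalProjection_mem_subspace_eq_self]
  -- each "matrix coefficient" of S is continuous
  have hcoordV : ∀ v : V, ContinuousOn (fun t => S t v) (Icc (0 : ℝ) a) := by
    intro v
    exact Q.continuous.comp_continuousOn (hcont (v : H))
  -- norm continuity of S on [0, a]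
  have hScont : ContinuousOn S (Icc (0 : ℝ) a) := by
    obtain ⟨C, hC, hCle⟩ := (Module.finBasis ℂ V).exists_opNorm_le (F := V)
    set b := Module.finBasis ℂ V with hb
    have hpi : ContinuousOn (fun t => fun i => S t (b i)) (Icc (0 : ℝ) a) :=
      continuousOn_pi.mpr fun i => hcoordV (b i)
    refine (Metric.continuousOn_iff (f := S) (s := Icc (0:ℝ) a)).mpr ?_
    intro t0 ht0 δ hδ
    have hM : (0 : ℝ) < δ / (2 * C) := by positivity
    obtain ⟨r, hr, hrr⟩ := ((Metric.continuousOn_iff (f := fun t i => S t (b i)) (s := Icc (0:ℝ) a)).mp hpi) t0 ht0 _ hM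
    refine ⟨r, hr, fun t ht htr => ?_⟩
    have hdist := hrr t ht htr
    have hbound : ∀ i, ‖(S t - S t0) (b i)‖ ≤ δ / (2 * C) := by
      intro i
      have := dist_le_pi_dist (fun i => S t (b i)) (fun i => S t0 (b i)) i
      have h2 : dist (S t (b i)) (S t0 (b i)) ≤ δ / (2 * C) :=
        le_of_lt (lt_of_le_of_lt this hdist)
      simpa [ContinuousLinearMap.sub_apply, dist_eq_norm] using h2
    have hnorm : ‖S t - S t0‖ ≤ C * (δ / (2 * C)) := hCle (le_of_lt hM) hbound
    have : C * (δ / (2 * C)) < δ := by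
      rw [mul_div_assoc']
      rw [div_lt_iff₀ (by positivity)]
      nlinarith
    calc dist (S t) (S t0) = ‖S t - S t0‖ := by exact dist_eq_norm (S t) (S t0)
      _ ≤ C * (δ / (2 * C)) := hnorm
      _ < δ := this
  -- pick ε so that S t is close to 1 for t ∈ [0, ε]
  obtain ⟨r, hr, hrr⟩ := ((Metric.continuousOn_iff (f := S) (s := Icc (0:ℝ) a)).mp hScont) 0 ⟨le_refl 0, le_of_lt ha⟩ 1 one_pos
  set ε : ℝ := min (r / 2) a with hε
  have hε0 : 0 < ε := lt_min (by positivity) ha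
  have hεa : ε ≤ a := min_le_right _ _
  have hsub : Icc (0 : ℝ) ε ⊆ Icc (0 : ℝ) a := Icc_subset_Icc le_rfl hεa
  have hunit : ∀ t ∈ Icc (0 : ℝ) ε, IsUnit (S t) := by
    intro t ht
    have ht' : t ∈ Icc (0 : ℝ) a := hsub ht
    have htr : dist t 0 < r := by
      rw [Real.dist_eq, sub_zero, abs_of_nonneg ht.1]
      exact lt_of_le_of_lt (le_trans ht.2 (min_le_left _ _)) (by linarith)
    have hd := hrr t ht' htr
    have hd2 : ‖S t - S 0‖ < 1 := by exact (dist_eq_norm (S t) (S 0)).symm.trans_lt hd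
    rw [hS0] at hd2
    have hd' : ‖(1 : V →L[ℂ] V) - S t‖ < 1 := by
      have hrev := norm_sub_rev (S t) (1 : V →L[ℂ] V)
      linarith
    exact ⟨Units.oneSub ((1 : V →L[ℂ] V) - S t) hd', by simp⟩
  refine ⟨ε, hε0, hεa, fun t => (Ring.inverse (S t)) ∘L (Q ∘L P t), ?_, ?_, ?_⟩
  · -- continuity
    intro x
    have hinv : ContinuousOn (fun t => Ring.inverse (S t)) (Icc (0 : ℝ) ε) := by
      intro t ht
      have hca : ContinuousAt Ring.inverse (S t) := by
        have := NormedRing.inverse_continuousAt (R := V →L[ℂ] V) (hunit t ht).unit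
        rwa [IsUnit.unit_spec] at this
      exact hca.comp_continuousWithinAt ((hScont.mono hsub) t ht)
    have hvec : ContinuousOn (fun t => Q (P t x)) (Icc (0 : ℝ) ε) :=
      Q.continuous.comp_continuousOn ((hcont x).mono hsub)
    exact hinv.clm_apply hvec
  · -- the equation
    intro t ht x
    have hTx : ((Ring.inverse (S t)) ∘L (Q ∘L P t)) x = Ring.inverse (S t) (Q (P t x)) := rfl
    have hsplit : Q (P t (x - ((Ring.inverse (S t)) (Q (P t x)) : H)))
        = Q (P t x) - S t (Ring.inverse (S t) (Q (P t x))) := by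
      rw [map_sub, map_sub]
      rfl
    have hcancel : S t (Ring.inverse (S t) (Q (P t x))) = Q (P t x) := by
      have h1 : S t * Ring.inverse (S t) = 1 := Ring.mul_inverse_cancel _ (hunit t ht)
      calc S t (Ring.inverse (S t) (Q (P t x)))
          = (S t * Ring.inverse (S t)) (Q (P t x)) := rfl
        _ = Q (P t x) := by rw [h1]; rfl
    show Q (P t (x - _)) = 0
    rw [hTx, hsplit, hcancel, sub_self]
  · -- uniqueness
    intro T' _ heq t ht
    ext x
    have hmain : (T' t) x = ((Ring.inverse (S t)) ∘L (Q ∘L P t)) x := ?_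
    · exact congrArg Subtype.val hmain
    have h1 : Ring.inverse (S t) * S t = 1 := Ring.inverse_mul_cancel _ (hunit t ht)
    have h2 : Q (P t (x - (T' t x : H))) = 0 := heq t ht x
    have h3 : Q (P t x) - S t (T' t x) = 0 := by
      rw [← h2, map_sub, map_sub]; rfl
    have h4 : S t (T' t x) = Q (P t x) := by
      have := sub_eq_zero.mp h3
      exact this.symm
    calc T' t x = (Ring.inverse (S t) * S t) (T' t x) := by rw [h1]; rfl
      _ = Ring.inverse (S t) (S t (T' t x)) := rfl
      _ = Ring.inverse (S t) (Q (P t x)) := by rw [h4]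
      _ = ((Ring.inverse (S t)) ∘L (Q ∘L P t)) x := rfl
end

section
/- Let p(x', t', y, ξ, τ, η) = −ξτ − x' t' h(x' t', y, η) where h(r, y, η) = Σ h^{ij}(r, y) η_i η_j is a smooth family of positive-definite quadratic forms in η. Let H_p be the Hamilton vector field of p and φ(x', t') = x' + t'. Then H_p² φ = −(x' + t')[h(x't', y, η) + x' t' h₁(x't', y, η)], where h₁ denotes ∂h/∂r. Consequently, for x', t' in a sufficiently small neighborhood of 0 with x', t' ≥ 0, one has −φ · H_p² φ ≥ (1/2) φ² h(x't', y, η). -/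
open Set

/-- Let `p(x', t', y, ξ, τ, η) = −ξτ − x' t' h(x' t', y, η)` with `h(r, y, ·)` a smooth
family of positive-definite quadratic forms in `η` (with `∂_r h = h₁`), and let
`φ(x', t') = x' + t'`.  Since `H_p φ = −τ − ξ`, one computes
`H_p² φ = ∂_{x'} p + ∂_{t'} p = −(x' + t')[h(x't', y, η) + x' t' h₁(x't', y, η)]`;
and for `x', t' ≥ 0` in a sufficiently small neighborhood of `0`,
`−φ · H_p² φ ≥ (1/2) φ² h(x't', y, η)`. -/
theorem stmt14 {Y : Type*} [TopologicalSpace Y] [CompactSpace Y] {n : ℕ}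
    (h h₁ : ℝ → Y → EuclideanSpace ℝ (Fin n) → ℝ)
    (hcont : Continuous fun q : ℝ × Y × EuclideanSpace ℝ (Fin n) => h q.1 q.2.1 q.2.2)
    (hcont1 : Continuous fun q : ℝ × Y × EuclideanSpace ℝ (Fin n) => h₁ q.1 q.2.1 q.2.2)
    (hhom : ∀ r y (c : ℝ) η, h r y (c • η) = c ^ 2 * h r y η)
    (hhom1 : ∀ r y (c : ℝ) η, h₁ r y (c • η) = c ^ 2 * h₁ r y η)
    (hpos : ∀ r y η, η ≠ 0 → 0 < h r y η)
    (hder : ∀ r y η, HasDerivAt (fun ρ => h ρ y η) (h₁ r y η) r) :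
    (∀ (x' t' : ℝ) (y : Y) (η : EuclideanSpace ℝ (Fin n)) (ξ τ : ℝ),
      deriv (fun a : ℝ => -(ξ * τ) - a * t' * h (a * t') y η) x' +
        deriv (fun b : ℝ => -(ξ * τ) - x' * b * h (x' * b) y η) t' =
      -((x' + t') * (h (x' * t') y η + x' * t' * h₁ (x' * t') y η))) ∧
    (∃ ε > (0 : ℝ), ∀ x' ∈ Icc (0 : ℝ) ε, ∀ t' ∈ Icc (0 : ℝ) ε,
      ∀ (y : Y) (η : EuclideanSpace ℝ (Fin n)),
        -((x' + t') *
            (-((x' + t') * (h (x' * t') y η + x' * t' * h₁ (x' * t') y η)))) ≥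
          (1 / 2) * (x' + t') ^ 2 * h (x' * t') y η) := by
  constructor
  · intro x' t' y η ξ τ
    -- derivative of a ↦ h (a * t') y η
    have hc1 : HasDerivAt (fun a : ℝ => h (a * t') y η) (t' * h₁ (x' * t') y η) x' := by
      have hm : HasDerivAt (fun a : ℝ => a * t') t' x' := hasDerivAt_mul_const t'
      have := (hder (x' * t') y η).comp x' hm
      simpa [mul_comm, Function.comp_def] using this
    have hc2 : HasDerivAt (fun b : ℝ => h (x' * b) y η) (x' * h₁ (x' * t') y η) t' := by
      have hm : HasDerivAt (fun b : ℝ => x' * b) x' t' := by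
        simpa [mul_comm] using (hasDerivAt_mul_const x' : HasDerivAt (fun b : ℝ => b * x') x' t')
      have := (hder (x' * t') y η).comp t' hm
      simpa [mul_comm, Function.comp_def] using this
    have H1 : HasDerivAt (fun a : ℝ => -(ξ * τ) - a * t' * h (a * t') y η)
        (-(t' * h (x' * t') y η + x' * t' * (t' * h₁ (x' * t') y η))) x' := by
      have hprod : HasDerivAt (fun a : ℝ => a * t' * h (a * t') y η)
          (t' * h (x' * t') y η + x' * t' * (t' * h₁ (x' * t') y η)) x' :=
        (hasDerivAt_mul_const t').mul hc1
      simpa [Pi.sub_def] using (hasDerivAt_const x' (-(ξ * τ))).sub hprod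
    have H2 : HasDerivAt (fun b : ℝ => -(ξ * τ) - x' * b * h (x' * b) y η)
        (-(x' * h (x' * t') y η + x' * t' * (x' * h₁ (x' * t') y η))) t' := by
      have hm : HasDerivAt (fun b : ℝ => x' * b) x' t' := by
        simpa [mul_comm] using (hasDerivAt_mul_const x' : HasDerivAt (fun b : ℝ => b * x') x' t')
      have hprod : HasDerivAt (fun b : ℝ => x' * b * h (x' * b) y η)
          (x' * h (x' * t') y η + x' * t' * (x' * h₁ (x' * t') y η)) t' := hm.mul hc2
      simpa [Pi.sub_def] using (hasDerivAt_const t' (-(ξ * τ))).sub hprod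
    rw [H1.deriv, H2.deriv]; ring
  · -- the quantitative estimate, via compactness of Y × sphere
    set F : ℝ × Y × EuclideanSpace ℝ (Fin n) → ℝ :=
      fun q => h q.1 q.2.1 q.2.2 + 2 * q.1 * h₁ q.1 q.2.1 q.2.2 with hF
    have hFcont : Continuous F :=
      hcont.add ((continuous_const.mul continuous_fst).mul hcont1)
    have hS : IsCompact (Metric.sphere (0 : EuclideanSpace ℝ (Fin n)) 1) := isCompact_sphere 0 1
    have hC : IsCompact ((univ : Set Y) ×ˢ Metric.sphere (0 : EuclideanSpace ℝ (Fin n)) 1) :=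
      isCompact_univ.prod hS
    have hV : IsOpen (F ⁻¹' Ioi 0) := isOpen_Ioi.preimage hFcont
    have hsub : ({(0 : ℝ)} ×ˢ ((univ : Set Y) ×ˢ Metric.sphere (0 : EuclideanSpace ℝ (Fin n)) 1))
        ⊆ F ⁻¹' Ioi 0 := by
      rintro ⟨r, y, η⟩ ⟨hr, -, hη⟩
      simp only [mem_singleton_iff] at hr
      subst hr
      have hη0 : η ≠ 0 := by
        intro h0
        rw [mem_sphere_iff_norm, h0, sub_zero, norm_zero] at hη
        norm_num at hη
      have := hpos 0 y η hη0
      simp only [mem_preimage, mem_Ioi, hF]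
      simpa using this
    obtain ⟨u, v, huo, hvo, h0u, hCv, huv⟩ :=
      generalized_tube_lemma isCompact_singleton hC hV hsub
    have h0mem : (0 : ℝ) ∈ u := h0u rfl
    obtain ⟨δ, hδ, hball⟩ := Metric.isOpen_iff.mp huo 0 h0mem
    refine ⟨min (δ / 2) 1, by positivity, ?_⟩
    intro x' hx' t' ht' y η
    obtain ⟨hx0, hxε⟩ := hx'
    obtain ⟨ht0, htε⟩ := ht'
    set r := x' * t' with hr
    have hrδ : |r| < δ := by
      have h1 : x' ≤ δ / 2 := le_trans hxε (min_le_left _ _)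
      have h2 : t' ≤ 1 := le_trans htε (min_le_right _ _)
      have : r ≤ δ / 2 := by
        calc r = x' * t' := rfl
        _ ≤ (δ / 2) * 1 := by apply mul_le_mul h1 h2 ht0; positivity
        _ = δ / 2 := by ring
      rw [abs_of_nonneg (mul_nonneg hx0 ht0)]
      linarith
    have hru : r ∈ u := hball (by simpa [Real.dist_eq] using hrδ)
    have key : 0 ≤ h r y η + 2 * r * h₁ r y η := by
      rcases eq_or_ne η 0 with h0 | h0
      · have e1 : h r y η = 0 := by
          have := hhom r y 0 η
          simpa [h0, eq_comm] using this.symm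
        have e2 : h₁ r y η = 0 := by
          have := hhom1 r y 0 η
          simpa [h0, eq_comm] using this.symm
        simp [e1, e2]
      · have hcpos : (0 : ℝ) < ‖η‖ := norm_pos_iff.mpr h0
        set w : EuclideanSpace ℝ (Fin n) := ‖η‖⁻¹ • η with hw
        have hwsphere : w ∈ Metric.sphere (0 : EuclideanSpace ℝ (Fin n)) 1 := by
          simp only [mem_sphere_iff_norm, sub_zero, hw, norm_smul, norm_inv, norm_norm]
          field_simp
        have hmem : (r, y, w) ∈ u ×ˢ v := ⟨hru, hCv ⟨mem_univ y, hwsphere⟩⟩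
        have hFpos : 0 < F (r, y, w) := huv hmem
        have hηw : η = ‖η‖ • w := by
          rw [hw, smul_smul]
          field_simp
          rw [one_smul]
        have e1 : h r y η = ‖η‖ ^ 2 * h r y w := by
          conv_lhs => rw [hηw]
          rw [hhom]
        have e2 : h₁ r y η = ‖η‖ ^ 2 * h₁ r y w := by
          conv_lhs => rw [hηw]
          rw [hhom1]
        have hwkey : 0 ≤ h r y w + 2 * r * h₁ r y w := le_of_lt (by simpa [hF] using hFpos)
        rw [e1, e2]
        nlinarith [sq_nonneg (‖η‖ : ℝ)]
    nlinarith [sq_nonneg (x' + t'), mul_nonneg (sq_nonneg (x' + t')) key]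
end
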